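/- Let functions count vectors r and r' consist of values r_{y=a,h=j}, r_{y=a}, r_{h=j} ∈ [0,1] (a,j ∈ {0,1}) with r_{y=a} = Σ_j r_{y=a,h=j} and r_{h=j} = Σ_a r_{y=a,h=j} (and similarly for r'), and suppose |r_{y=a,h=j} - r'_{y=a,h=j}| ≤ 1/m for all a,j, with m ≥ 3. Then the Gini-criterion gain J(r) = G(r_{y=1}) - r_{h=0}·G(r_{y=1,h=0}/r_{h=0}) - r_{h=1}·G(r_{y=1,h=1}/r_{h=1}) with G(q) = 4q(1-q) satisfies |J(r) - J(r')| ≤ 20/m. -/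
import Mathlib


open Finset

/-- The Gini criterion `G(q) = 4q(1-q)`. -/
def gini (q : ℝ) : ℝ := 4 * q * (1 - q)

/-- The Gini-criterion gain of a split, computed from the vector of empirical
fractions `r a j = r_{y=a,h=j}`.  The term `r_{h=j} * G(r_{y=1,h=j}/r_{h=j})`
is written as `4 * r_{y=1,h=j} * ((r_{h=j} - r_{y=1,h=j})/r_{h=j}`, which is
`0` when `r_{h=j} = 0` (Lean's convention `x / 0 = 0`). -/
noncomputable def giniGain (r : Fin 2 → Fin 2 → ℝ) : ℝ :=
  gini (r 1 0 + r 1 1)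
    - 4 * r 1 0 * ((r 0 0 + r 1 0) - r 1 0) / (r 0 0 + r 1 0)
    - 4 * r 1 1 * ((r 0 1 + r 1 1) - r 1 1) / (r 0 1 + r 1 1)

lemma harm_le (x y : ℝ) (hx : 0 ≤ x) (hy : 0 ≤ y) :
    4 * x * y / (x + y) ≤ 4 * x := by
  rcases eq_or_lt_of_le (add_nonneg hx hy) with h | h
  · rw [← h, div_zero]; linarith
  · rw [div_le_iff₀ h]; nlinarith

lemma harm_nonneg (x y : ℝ) (hx : 0 ≤ x) (hy : 0 ≤ y) :
    0 ≤ 4 * x * y / (x + y) := by positivity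

lemma harm_lip (x y x' y' d : ℝ) (hx : 0 ≤ x) (hy : 0 ≤ y) (hx' : 0 ≤ x')
    (hy' : 0 ≤ y') (h1 : |x - x'| ≤ d) (h2 : |y - y'| ≤ d) :
    |4 * x * y / (x + y) - 4 * x' * y' / (x' + y')| ≤ 4 * d := by
  have hd : 0 ≤ d := le_trans (abs_nonneg _) h1
  rw [abs_le] at h1 h2
  rcases eq_or_lt_of_le (add_nonneg hx hy) with hs | hs
  · have hx0 : x = 0 := by linarith
    have hy0 : y = 0 := by linarith
    have hxd : x' ≤ d := by rw [hx0] at h1; linarith [h1.1]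
    have h1' : 4 * x' * y' / (x' + y') ≤ 4 * d :=
      le_trans (harm_le x' y' hx' hy') (by linarith)
    have h2' := harm_nonneg x' y' hx' hy'
    rw [hx0, hy0]
    rw [abs_le]; constructor <;> simp <;> linarith
  · rcases eq_or_lt_of_le (add_nonneg hx' hy') with hs' | hs'
    · have hx0 : x' = 0 := by linarith
      have hy0 : y' = 0 := by linarith
      have hxd : x ≤ d := by rw [hx0] at h1; linarith [h1.2]
      have h1' : 4 * x * y / (x + y) ≤ 4 * d :=
        le_trans (harm_le x y hx hy) (by linarith)
      have h2' := harm_nonneg x y hx hy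
      rw [hx0, hy0]
      rw [abs_le]; constructor <;> simp <;> linarith
    · rw [div_sub_div _ _ (ne_of_gt hs) (ne_of_gt hs'), abs_div,
        div_le_iff₀ (by positivity)]
      have key : 4 * x * y * (x' + y') - (x + y) * (4 * x' * y')
          = 4 * (x * x' * (y - y') + y * y' * (x - x')) := by ring
      rw [key, abs_le]
      have habs : |(x + y) * (x' + y')| = (x + y) * (x' + y') :=
        abs_of_pos (by positivity)
      rw [habs]
      constructor <;>
        nlinarith [mul_nonneg hx hx', mul_nonneg hy hy', mul_nonneg hx hy',
          mul_nonneg hy hx', mul_nonneg (mul_nonneg hx hx') hd,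
          mul_nonneg (mul_nonneg hy hy') hd,
          mul_nonneg (mul_nonneg hx hy') hd, mul_nonneg (mul_nonneg hy hx') hd]

theorem giniGain_sensitivity (m : ℝ) (hm : 3 ≤ m) (r r' : Fin 2 → Fin 2 → ℝ)
    (hr : ∀ a j, r a j ∈ Set.Icc (0:ℝ) 1)
    (hr' : ∀ a j, r' a j ∈ Set.Icc (0:ℝ) 1)
    (hsum : ∑ a : Fin 2, ∑ j : Fin 2, r a j = 1)
    (hsum' : ∑ a : Fin 2, ∑ j : Fin 2, r' a j = 1)
    (hclose : ∀ a j, |r a j - r' a j| ≤ 1 / m) :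
    |giniGain r - giniGain r'| ≤ 20 / m := by
  have hm0 : (0:ℝ) < m := by linarith
  simp [Fin.sum_univ_two] at hsum hsum'
  obtain ⟨h00a, h00b⟩ := hr 0 0
  obtain ⟨h01a, h01b⟩ := hr 0 1
  obtain ⟨h10a, h10b⟩ := hr 1 0
  obtain ⟨h11a, h11b⟩ := hr 1 1
  obtain ⟨h00a', h00b'⟩ := hr' 0 0
  obtain ⟨h01a', h01b'⟩ := hr' 0 1
  obtain ⟨h10a', h10b'⟩ := hr' 1 0
  obtain ⟨h11a', h11b'⟩ := hr' 1 1
  have c00 := hclose 0 0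
  have c01 := hclose 0 1
  have c10 := hclose 1 0
  have c11 := hclose 1 1
  -- Gini term
  have hp : r 1 0 + r 1 1 ≤ 1 := by linarith
  have hp' : r' 1 0 + r' 1 1 ≤ 1 := by linarith
  have hgini : |gini (r 1 0 + r 1 1) - gini (r' 1 0 + r' 1 1)| ≤ 8 / m := by
    have key : gini (r 1 0 + r 1 1) - gini (r' 1 0 + r' 1 1)
        = 4 * ((r 1 0 + r 1 1) - (r' 1 0 + r' 1 1))
          * (1 - (r 1 0 + r 1 1) - (r' 1 0 + r' 1 1)) := by
      simp only [gini]; ring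
    rw [key, abs_mul, abs_mul]
    have h1 : |(4:ℝ)| = 4 := by norm_num
    rw [h1]
    have h2 : |(r 1 0 + r 1 1) - (r' 1 0 + r' 1 1)| ≤ 2 / m := by
      rw [abs_le] at c10 c11 ⊢
      constructor <;> [skip; skip] <;>
        · have : 2 / m = 1 / m + 1 / m := by ring
          rw [this]; linarith [c10.1, c10.2, c11.1, c11.2]
    have h3 : |1 - (r 1 0 + r 1 1) - (r' 1 0 + r' 1 1)| ≤ 1 := by
      rw [abs_le]; constructor <;> linarith
    calc 4 * |(r 1 0 + r 1 1) - (r' 1 0 + r' 1 1)|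
          * |1 - (r 1 0 + r 1 1) - (r' 1 0 + r' 1 1)|
        ≤ 4 * (2 / m) * 1 := by
          apply mul_le_mul _ h3 (abs_nonneg _) (by positivity)
          apply mul_le_mul_of_nonneg_left h2 (by norm_num)
      _ = 8 / m := by ring
  -- harmonic terms
  have hharm0 : |4 * r 1 0 * ((r 0 0 + r 1 0) - r 1 0) / (r 0 0 + r 1 0)
      - 4 * r' 1 0 * ((r' 0 0 + r' 1 0) - r' 1 0) / (r' 0 0 + r' 1 0)|
      ≤ 4 * (1 / m) := by
    have e1 : 4 * r 1 0 * ((r 0 0 + r 1 0) - r 1 0) / (r 0 0 + r 1 0)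
        = 4 * r 1 0 * r 0 0 / (r 1 0 + r 0 0) := by ring_nf
    have e2 : 4 * r' 1 0 * ((r' 0 0 + r' 1 0) - r' 1 0) / (r' 0 0 + r' 1 0)
        = 4 * r' 1 0 * r' 0 0 / (r' 1 0 + r' 0 0) := by ring_nf
    rw [e1, e2]
    exact harm_lip _ _ _ _ _ h10a h00a h10a' h00a' c10 c00
  have hharm1 : |4 * r 1 1 * ((r 0 1 + r 1 1) - r 1 1) / (r 0 1 + r 1 1)
      - 4 * r' 1 1 * ((r' 0 1 + r' 1 1) - r' 1 1) / (r' 0 1 + r' 1 1)|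
      ≤ 4 * (1 / m) := by
    have e1 : 4 * r 1 1 * ((r 0 1 + r 1 1) - r 1 1) / (r 0 1 + r 1 1)
        = 4 * r 1 1 * r 0 1 / (r 1 1 + r 0 1) := by ring_nf
    have e2 : 4 * r' 1 1 * ((r' 0 1 + r' 1 1) - r' 1 1) / (r' 0 1 + r' 1 1)
        = 4 * r' 1 1 * r' 0 1 / (r' 1 1 + r' 0 1) := by ring_nf
    rw [e1, e2]
    exact harm_lip _ _ _ _ _ h11a h01a h11a' h01a' c11 c01
  have expand : giniGain r - giniGain r'
      = (gini (r 1 0 + r 1 1) - gini (r' 1 0 + r' 1 1))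
        - (4 * r 1 0 * ((r 0 0 + r 1 0) - r 1 0) / (r 0 0 + r 1 0)
            - 4 * r' 1 0 * ((r' 0 0 + r' 1 0) - r' 1 0) / (r' 0 0 + r' 1 0))
        - (4 * r 1 1 * ((r 0 1 + r 1 1) - r 1 1) / (r 0 1 + r 1 1)
            - 4 * r' 1 1 * ((r' 0 1 + r' 1 1) - r' 1 1) / (r' 0 1 + r' 1 1)) := by
    simp only [giniGain]; ring
  rw [expand]
  have step1 := abs_sub (gini (r 1 0 + r 1 1) - gini (r' 1 0 + r' 1 1)
        - (4 * r 1 0 * ((r 0 0 + r 1 0) - r 1 0) / (r 0 0 + r 1 0)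
            - 4 * r' 1 0 * ((r' 0 0 + r' 1 0) - r' 1 0) / (r' 0 0 + r' 1 0)))
      (4 * r 1 1 * ((r 0 1 + r 1 1) - r 1 1) / (r 0 1 + r 1 1)
            - 4 * r' 1 1 * ((r' 0 1 + r' 1 1) - r' 1 1) / (r' 0 1 + r' 1 1))
  have step2 := abs_sub (gini (r 1 0 + r 1 1) - gini (r' 1 0 + r' 1 1))
      (4 * r 1 0 * ((r 0 0 + r 1 0) - r 1 0) / (r 0 0 + r 1 0)
            - 4 * r' 1 0 * ((r' 0 0 + r' 1 0) - r' 1 0) / (r' 0 0 + r' 1 0))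
  have hfin : (8:ℝ) / m + (4 * (1/m) + 4 * (1/m)) ≤ 20 / m := by
    have h16 : (8:ℝ) / m + (4 * (1/m) + 4 * (1/m)) = 16 / m := by ring
    rw [h16]
    gcongr
    norm_num
  linarith [step1, step2, hgini, hharm0, hharm1]
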